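/- (Lemma 5, exact penalty for consensus of multipliers.) If K > √N K₀, then for every x ∈ Ω the set of maximizers of λ ↦ L̃(x, λ) over (ℝ^M_+)^N coincides with the set of maximizers of λ ↦ L̃(x, λ) over the consensus set S. -/

import Mathlib

open scoped RealInnerProductSpace BigOperators

section auxgraph
set_option linter.unusedSectionVars false
variable {V : Type*} [Fintype V] [DecidableEq V] {G : SimpleGraph V} [DecidableRel G.Adj]

lemma aux_walk_bound (t : V → V → ℝ) (ht0 : ∀ a, t a a = 0)
    (htri : ∀ a b c, t a c ≤ t a b + t b c)
    {i j : V} (p : G.Walk i j) :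
    t i j ≤ (p.darts.map fun d => t d.toProd.1 d.toProd.2).sum := by
  induction p with
  | nil => simp [ht0]
  | @cons u v w h q ih =>
      rw [SimpleGraph.Walk.darts_cons, List.map_cons, List.sum_cons]
      exact (htri u v w).trans (by linarith)

lemma aux_darts_sum (t : V → V → ℝ) (hsym : ∀ a b, t a b = t b a) (hnn : ∀ a b, 0 ≤ t a b)
    {i j : V} (p : G.Walk i j) (hp : p.IsPath) :
    (p.darts.map fun d => t d.toProd.1 d.toProd.2).sum
      ≤ (1 / 2) * ∑ d : G.Dart, t d.toProd.1 d.toProd.2 := by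
  set w : G.Dart → ℝ := fun d => t d.toProd.1 d.toProd.2 with hw
  have hEnd : (p.darts.map SimpleGraph.Dart.edge).Nodup := hp.edges_nodup
  have hDnd : p.darts.Nodup := hEnd.of_map SimpleGraph.Dart.edge
  set A : Finset G.Dart := p.darts.toFinset with hA
  set B : Finset G.Dart := A.image SimpleGraph.Dart.symm with hB
  have hdisj : Disjoint A B := by
    rw [Finset.disjoint_left]
    rintro d hdA hdB
    rw [hB, Finset.mem_image] at hdB
    obtain ⟨e, heA, he⟩ := hdB
    have hde : d ∈ p.darts := List.mem_toFinset.mp hdA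
    have hee : e ∈ p.darts := List.mem_toFinset.mp heA
    have hedge : SimpleGraph.Dart.edge e = SimpleGraph.Dart.edge d := by
      rw [← he, SimpleGraph.Dart.edge_symm]
    have : e = d := List.inj_on_of_nodup_map hEnd hee hde hedge
    exact SimpleGraph.Dart.symm_ne e (this ▸ he)
  have hsumA : A.sum w = (p.darts.map w).sum := List.sum_toFinset w hDnd
  have hsumB : B.sum w = A.sum w := by
    rw [hB, Finset.sum_image (fun a _ b _ h => SimpleGraph.Dart.symm_involutive.injective h)]
    refine Finset.sum_congr rfl fun d _ => ?_
    simp [hw, hsym d.toProd.2 d.toProd.1]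
  have hsub : (A ∪ B).sum w ≤ ∑ d : G.Dart, w d :=
    Finset.sum_le_sum_of_subset_of_nonneg (Finset.subset_univ _) fun d _ _ => hnn _ _
  rw [Finset.sum_union hdisj, hsumA, hsumB, hsumA] at hsub
  linarith

lemma aux_dart_total (t : V → V → ℝ) :
    ∑ d : G.Dart, t d.toProd.1 d.toProd.2 = ∑ a, ∑ b ∈ G.neighborFinset a, t a b := by
  let e : (Σ a : V, G.neighborSet a) ≃ G.Dart :=
    { toFun := fun s => ⟨(s.fst, s.snd), s.snd.property⟩
      invFun := fun d => ⟨d.toProd.1, d.toProd.2, d.adj⟩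
      left_inv := fun s => by rcases s with ⟨a, b, hb⟩; rfl
      right_inv := fun d => by rcases d with ⟨⟨a, b⟩, h⟩; rfl }
  rw [← Equiv.sum_comp e (fun d => t d.toProd.1 d.toProd.2)]
  rw [← Finset.univ_sigma_univ, Finset.sum_sigma]
  simp only [e, Equiv.coe_fn_mk]
  refine Finset.sum_congr rfl fun a _ => ?_
  rw [SimpleGraph.neighborFinset_def]
  exact Finset.sum_set_coe (f := fun b => t a b) (G.neighborSet a)

lemma aux_consensus_bound (t : V → V → ℝ) (ht0 : ∀ a, t a a = 0)
    (hsym : ∀ a b, t a b = t b a) (hnn : ∀ a b, 0 ≤ t a b)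
    (htri : ∀ a b c, t a c ≤ t a b + t b c) (hG : G.Connected) (i j : V) :
    t i j ≤ (1 / 2) * ∑ a, ∑ b ∈ G.neighborFinset a, t a b := by
  obtain ⟨q⟩ := hG.preconnected i j
  calc t i j ≤ (q.toPath.1.darts.map fun d => t d.toProd.1 d.toProd.2).sum :=
        aux_walk_bound t ht0 htri q.toPath.1
    _ ≤ (1 / 2) * ∑ d : G.Dart, t d.toProd.1 d.toProd.2 :=
        aux_darts_sum t hsym hnn q.toPath.1 q.toPath.2
    _ = _ := by rw [aux_dart_total]
end auxgraph

theorem stmt_2 (N M : ℕ) (hN : 0 < N) (n : Fin N → ℕ)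
    (G : SimpleGraph (Fin N)) [DecidableRel G.Adj] (hG : G.Connected)
    (Ω U : ∀ i, Set (EuclideanSpace ℝ (Fin (n i))))
    (f : ∀ i, EuclideanSpace ℝ (Fin (n i)) → ℝ)
    (g : ∀ i, EuclideanSpace ℝ (Fin (n i)) → EuclideanSpace ℝ (Fin M))
    (hΩcomp : ∀ i, IsCompact (Ω i)) (hΩconv : ∀ i, Convex ℝ (Ω i))
    (hΩne : ∀ i, (Ω i).Nonempty)
    (hUopen : ∀ i, IsOpen (U i)) (hΩU : ∀ i, Ω i ⊆ U i)
    (hf : ∀ i, StrictConvexOn ℝ (U i) (f i)) (hflip : ∀ i, LocallyLipschitzOn (U i) (f i))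
    (hg : ∀ i k, ConvexOn ℝ (U i) fun z => g i z k)
    (hglip : ∀ i, LocallyLipschitzOn (U i) (g i))
    -- the penalty constant `K₀ = max_{x ∈ Ω} ‖(g_1(x_1),…,g_N(x_N))‖` and `K > √N K₀`
    (K₀ K : ℝ)
    (hK₀ : IsGreatest {r | ∃ x : ∀ i, EuclideanSpace ℝ (Fin (n i)),
      (∀ i, x i ∈ Ω i) ∧ r = Real.sqrt (∑ i, ‖g i (x i)‖ ^ 2)} K₀)
    (hK : Real.sqrt N * K₀ < K)
    -- the consensus penalty and the modified Lagrangian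
    (φ : (Fin N → EuclideanSpace ℝ (Fin M)) → ℝ)
    (hφ : ∀ lam, φ lam = (1 / 2) * ∑ i, ∑ j ∈ G.neighborFinset i, ∑ m, |lam i m - lam j m|)
    (Lt : (∀ i, EuclideanSpace ℝ (Fin (n i))) → (Fin N → EuclideanSpace ℝ (Fin M)) → ℝ)
    (hLt : ∀ x lam, Lt x lam = (∑ i, (f i (x i) + ⟪lam i, g i (x i)⟫)) - K * φ lam) :
    ∀ x : ∀ i, EuclideanSpace ℝ (Fin (n i)), (∀ i, x i ∈ Ω i) →
      {lam : Fin N → EuclideanSpace ℝ (Fin M) | (∀ i m, 0 ≤ lam i m) ∧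
          ∀ μ : Fin N → EuclideanSpace ℝ (Fin M), (∀ i m, 0 ≤ μ i m) → Lt x μ ≤ Lt x lam}
        = {lam : Fin N → EuclideanSpace ℝ (Fin M) |
            ((∀ i m, 0 ≤ lam i m) ∧ ∀ i j, lam i = lam j) ∧
            ∀ μ : Fin N → EuclideanSpace ℝ (Fin M),
              ((∀ i m, 0 ≤ μ i m) ∧ ∀ i j, μ i = μ j) → Lt x μ ≤ Lt x lam} := by
  intro x hx
  classical
  have hK₀x : Real.sqrt (∑ i, ‖g i (x i)‖ ^ 2) ≤ K₀ := hK₀.2 ⟨x, hx, rfl⟩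
  have hK₀0 : 0 ≤ K₀ := by
    obtain ⟨y, hy, hEq⟩ := hK₀.1
    rw [hEq]; positivity
  have hNpos : (0:ℝ) < N := by exact_mod_cast hN
  have hφnn : ∀ lam, 0 ≤ φ lam := by
    intro lam; rw [hφ]; positivity
  have htbound : ∀ (lam : Fin N → EuclideanSpace ℝ (Fin M)) (i j : Fin N),
      ∑ m, |lam i m - lam j m| ≤ φ lam := by
    intro lam i j
    rw [hφ]
    exact aux_consensus_bound (fun a b => ∑ m, |lam a m - lam b m|)
      (fun a => by simp)
      (fun a b => by simp [abs_sub_comm])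
      (fun a b => Finset.sum_nonneg fun m _ => abs_nonneg _)
      (fun a b d => by
        rw [← Finset.sum_add_distrib]
        exact Finset.sum_le_sum fun m _ => abs_sub_le _ _ _)
      hG i j
  have hφpos : ∀ lam : Fin N → EuclideanSpace ℝ (Fin M), (∃ i j, lam i ≠ lam j) → 0 < φ lam := by
    rintro lam ⟨i, j, hij⟩
    have ht := htbound lam i j
    have hpos : 0 < ∑ m, |lam i m - lam j m| := by
      rcases lt_or_eq_of_le (Finset.sum_nonneg fun m _ => abs_nonneg (lam i m - lam j m)) with h | h
      · exact h
      · exfalso; apply hij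
        ext m
        have := (Finset.sum_eq_zero_iff_of_nonneg (fun m _ => abs_nonneg (lam i m - lam j m))).mp
          h.symm m (Finset.mem_univ m)
        have := abs_eq_zero.mp this
        linarith
    linarith
  -- key improvement lemma: averaging improves the Lagrangian by (K - √N K₀) φ
  have key : ∀ lam : Fin N → EuclideanSpace ℝ (Fin M), (∀ i m, 0 ≤ lam i m) →
      ∃ ν : Fin N → EuclideanSpace ℝ (Fin M), (∀ i m, 0 ≤ ν i m) ∧ (∀ i j, ν i = ν j) ∧
        Lt x lam + (K - Real.sqrt N * K₀) * φ lam ≤ Lt x ν := by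
    intro lam hlam
    set bar : EuclideanSpace ℝ (Fin M) := (N:ℝ)⁻¹ • ∑ j, lam j with hbar
    have hbarm : ∀ m, bar m = (N:ℝ)⁻¹ * ∑ j, lam j m := by
      intro m
      have h : (∑ j, lam j : EuclideanSpace ℝ (Fin M)) m = ∑ j, lam j m :=
        by simp
      simp [hbar, h]
    refine ⟨fun _ => bar, ?_, fun i j => rfl, ?_⟩
    · intro i m
      show (0:ℝ) ≤ bar m
      rw [hbarm]
      have h : (0:ℝ) ≤ ∑ j, lam j m := Finset.sum_nonneg fun j _ => hlam j m
      positivity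
    have hφν : φ (fun _ => bar) = 0 := by rw [hφ]; simp
    have hdev : ∀ i, ‖lam i - bar‖ ≤ φ lam := by
      intro i
      have hnorm : ‖lam i - bar‖ ≤ ∑ m, |(lam i - bar) m| := by
        rw [EuclideanSpace.norm_eq]
        have h1 : ∑ m, ‖(lam i - bar) m‖ ^ 2 ≤ (∑ m, |(lam i - bar) m|) ^ 2 := by
          simp only [Real.norm_eq_abs]
          exact Finset.sum_sq_le_sq_sum_of_nonneg fun m _ => abs_nonneg _
        calc Real.sqrt (∑ m, ‖(lam i - bar) m‖ ^ 2)
            ≤ Real.sqrt ((∑ m, |(lam i - bar) m|) ^ 2) := Real.sqrt_le_sqrt h1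
          _ = _ := Real.sqrt_sq (Finset.sum_nonneg fun m _ => abs_nonneg _)
      have happ : ∀ m, (lam i - bar) m = (N:ℝ)⁻¹ * ∑ j, (lam i m - lam j m) := by
        intro m
        have h2 : (lam i - bar) m = lam i m - bar m := rfl
        have h3 : ∑ j : Fin N, (lam i m - lam j m) = N * lam i m - ∑ j, lam j m := by
          rw [Finset.sum_sub_distrib, Finset.sum_const, Finset.card_univ, Fintype.card_fin,
            nsmul_eq_mul]
        rw [h2, hbarm, h3]
        field_simp
      calc ‖lam i - bar‖ ≤ ∑ m, |(lam i - bar) m| := hnorm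
        _ ≤ ∑ m, (N:ℝ)⁻¹ * ∑ j, |lam i m - lam j m| := by
            refine Finset.sum_le_sum fun m _ => ?_
            rw [happ m, abs_mul, abs_of_nonneg (show (0:ℝ) ≤ (N:ℝ)⁻¹ by positivity)]
            exact mul_le_mul_of_nonneg_left (Finset.abs_sum_le_sum_abs _ _) (by positivity)
        _ = (N:ℝ)⁻¹ * ∑ j, ∑ m, |lam i m - lam j m| := by
            rw [← Finset.mul_sum, Finset.sum_comm]
        _ ≤ (N:ℝ)⁻¹ * ∑ _j : Fin N, φ lam := by
            refine mul_le_mul_of_nonneg_left ?_ (by positivity)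
            exact Finset.sum_le_sum fun j _ => htbound lam i j
        _ = φ lam := by
            rw [Finset.sum_const, Finset.card_univ, Fintype.card_fin, nsmul_eq_mul]
            field_simp
    have hCS : ∑ i, ⟪lam i - bar, g i (x i)⟫ ≤ Real.sqrt N * K₀ * φ lam := by
      have h1 : ∑ i, ⟪lam i - bar, g i (x i)⟫ ≤ ∑ i, ‖lam i - bar‖ * ‖g i (x i)‖ :=
        Finset.sum_le_sum fun i _ => real_inner_le_norm _ _
      have h2 : (∑ i, ‖lam i - bar‖ * ‖g i (x i)‖) ^ 2
          ≤ (∑ i, ‖lam i - bar‖ ^ 2) * ∑ i, ‖g i (x i)‖ ^ 2 :=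
        Finset.sum_mul_sq_le_sq_mul_sq Finset.univ _ _
      have h3 : ∑ i, ‖lam i - bar‖ ^ 2 ≤ N * φ lam ^ 2 := by
        calc ∑ i, ‖lam i - bar‖ ^ 2 ≤ ∑ _i : Fin N, φ lam ^ 2 :=
            Finset.sum_le_sum fun i _ => pow_le_pow_left₀ (norm_nonneg _) (hdev i) 2
          _ = N * φ lam ^ 2 := by
            rw [Finset.sum_const, Finset.card_univ, Fintype.card_fin, nsmul_eq_mul]
      have h4 : ∑ i, ‖g i (x i)‖ ^ 2 ≤ K₀ ^ 2 := by
        have hs := Real.sq_sqrt (show (0:ℝ) ≤ ∑ i, ‖g i (x i)‖ ^ 2 by positivity)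
        nlinarith [Real.sqrt_nonneg (∑ i, ‖g i (x i)‖ ^ 2)]
      have h5 : (∑ i, ‖lam i - bar‖ * ‖g i (x i)‖) ^ 2 ≤ (Real.sqrt N * K₀ * φ lam) ^ 2 := by
        have hNs : Real.sqrt N ^ 2 = N := Real.sq_sqrt hNpos.le
        have hb : (0:ℝ) ≤ ∑ i, ‖g i (x i)‖ ^ 2 := by positivity
        have ha : (0:ℝ) ≤ ∑ i, ‖lam i - bar‖ ^ 2 := by positivity
        calc (∑ i, ‖lam i - bar‖ * ‖g i (x i)‖) ^ 2
            ≤ (∑ i, ‖lam i - bar‖ ^ 2) * ∑ i, ‖g i (x i)‖ ^ 2 := h2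
          _ ≤ (N * φ lam ^ 2) * K₀ ^ 2 := by
            exact mul_le_mul h3 h4 hb (by positivity)
          _ = (Real.sqrt N * K₀ * φ lam) ^ 2 := by rw [mul_pow, mul_pow, hNs]; ring
      have hrnn : (0:ℝ) ≤ Real.sqrt N * K₀ * φ lam := by
        have := hφnn lam
        positivity
      have hlnn : (0:ℝ) ≤ ∑ i, ‖lam i - bar‖ * ‖g i (x i)‖ :=
        Finset.sum_nonneg fun i _ => mul_nonneg (norm_nonneg _) (norm_nonneg _)
      nlinarith [h1]
    have hdiff : Lt x (fun _ => bar) = Lt x lam + K * φ lam - ∑ i, ⟪lam i - bar, g i (x i)⟫ := by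
      rw [hLt, hLt, hφν]
      simp only [inner_sub_left]
      rw [Finset.sum_add_distrib, Finset.sum_add_distrib, Finset.sum_sub_distrib]
      ring
    rw [hdiff]
    nlinarith [hCS]
  -- conclude the set equality
  ext lam
  simp only [Set.mem_setOf_eq]
  constructor
  · rintro ⟨hnn, hmax⟩
    have hcons : ∀ i j, lam i = lam j := by
      by_contra hij
      push_neg at hij
      obtain ⟨ν, hν1, hν2, hν3⟩ := key lam hnn
      have h1 : 0 < φ lam := hφpos lam hij
      have h2 : Lt x ν ≤ Lt x lam := hmax ν hν1
      have h3 : 0 < (K - Real.sqrt N * K₀) * φ lam :=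
        mul_pos (by linarith) h1
      linarith
    exact ⟨⟨hnn, hcons⟩, fun μ hμ => hmax μ hμ.1⟩
  · rintro ⟨⟨hnn, hcons⟩, hmax⟩
    refine ⟨hnn, fun μ hμ => ?_⟩
    obtain ⟨ν, hν1, hν2, hν3⟩ := key μ hμ
    have h1 : 0 ≤ (K - Real.sqrt N * K₀) * φ μ :=
      mul_nonneg (by linarith) (hφnn μ)
    have h2 : Lt x ν ≤ Lt x lam := hmax ν ⟨hν1, hν2⟩
    linarith
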